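/- Let n ≥ 1, a_1,...,a_n > 0, 0 < b_1 < b_2 < ... < b_n, λ > 0, and let M be the n×n matrix M = B + 2λ A B^{1/2} 𝟙𝟙ᵀ, where A = diag(a_i), B = diag(b_i), and 𝟙 = (1,...,1)ᵀ. Then M has n distinct real eigenvalues c_1 < c_2 < ... < c_n satisfying the interlacing b_1 < c_1 < b_2 < c_2 < ... < b_n < c_n. -/

import Mathlib

open Matrix Finset

lemma aux_factor (n : ℕ) (d u : Fin n → ℝ) (hd : ∀ i, d i ≠ 0) :
    (∏ i, d i) + ∑ i, u i * ∏ j ∈ Finset.univ.erase i, d j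
      = (∏ i, d i) * (1 + ∑ i, u i / d i) := by
  rw [mul_add, mul_one, Finset.mul_sum]
  congr 1
  refine Finset.sum_congr rfl fun i _ => ?_
  rw [← Finset.mul_prod_erase Finset.univ d (Finset.mem_univ i)]
  field_simp [hd i]

lemma aux_det (n : ℕ) (d u : Fin n → ℝ) (hd : ∀ i, d i ≠ 0) :
    (Matrix.diagonal d + Matrix.of (fun i _ => u i)).det
      = (∏ i, d i) + ∑ i, u i * ∏ j ∈ Finset.univ.erase i, d j := by
  have h1 : Matrix.diagonal d + Matrix.of (fun (i : Fin n) (_ : Fin n) => u i)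
      = Matrix.diagonal d *
        (1 + Matrix.replicateCol Unit (fun i => u i / d i) * Matrix.replicateRow Unit (fun _ : Fin n => (1:ℝ))) := by
    rw [mul_add, mul_one]
    congr 1
    ext i j
    simp [Matrix.mul_apply, Matrix.replicateCol, Matrix.replicateRow, Matrix.diagonal_apply]
    rw [mul_div_cancel₀ _ (hd i)]
  rw [h1, Matrix.det_mul, Matrix.det_diagonal, Matrix.det_one_add_replicateCol_mul_replicateRow]
  rw [aux_factor n d u hd]
  congr 1
  simp [dotProduct]

lemma aux_ivt {f : ℝ → ℝ} (hf : Continuous f) {p q : ℝ} (hpq : p ≤ q) {k : ℕ}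
    (h1 : 0 < (-1:ℝ)^k * f p) (h2 : 0 < (-1:ℝ)^(k+1) * f q) :
    ∃ x ∈ Set.Ioo p q, f x = 0 := by
  rcases Nat.even_or_odd k with hk | hk
  · rw [hk.neg_one_pow, one_mul] at h1
    have hq : f q < 0 := by
      rw [((hk.add_one)).neg_one_pow] at h2; linarith
    obtain ⟨x, hx, hfx⟩ := intermediate_value_Ioo' hpq hf.continuousOn
      (Set.mem_Ioo.2 ⟨hq, h1⟩)
    exact ⟨x, hx, hfx⟩
  · rw [hk.neg_one_pow] at h1
    have hp : f p < 0 := by linarith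
    have hq : 0 < f q := by
      rw [((hk.add_one)).neg_one_pow, one_mul] at h2; exact h2
    obtain ⟨x, hx, hfx⟩ := intermediate_value_Ioo hpq hf.continuousOn
      (Set.mem_Ioo.2 ⟨hp, hq⟩)
    exact ⟨x, hx, hfx⟩

lemma aux_negprod {ι : Type*} (s : Finset ι) (f : ι → ℝ) :
    ∏ j ∈ s, (-(f j)) = (-1:ℝ)^s.card * ∏ j ∈ s, f j := by
  rw [← Finset.prod_const, ← Finset.prod_mul_distrib]
  exact Finset.prod_congr rfl fun j _ => by ring

lemma aux_sign (n : ℕ) (b : Fin n → ℝ) (hbmono : StrictMono b) (k : Fin n) :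
    0 < (-1:ℝ)^(k:ℕ) * ∏ j ∈ Finset.univ.erase k, (b j - b k) := by
  have hsplit : Finset.univ.erase k = Finset.Iio k ∪ Finset.Ioi k := by
    ext j
    simp only [Finset.mem_erase, Finset.mem_union, Finset.mem_Iio, Finset.mem_Ioi,
      Finset.mem_univ, and_true]
    constructor
    · exact fun h => lt_or_gt_of_ne h
    · rintro (h | h)
      · exact ne_of_lt h
      · exact ne_of_gt h
  have hdisj : Disjoint (Finset.Iio k) (Finset.Ioi k) := by
    rw [Finset.disjoint_left]
    intro j h1 h2
    exact absurd ((Finset.mem_Iio.1 h1).trans (Finset.mem_Ioi.1 h2)) (lt_irrefl _)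
  have hp2 : 0 < ∏ j ∈ Finset.Ioi k, (b j - b k) :=
    Finset.prod_pos fun j hj => sub_pos.2 (hbmono (Finset.mem_Ioi.1 hj))
  have hp1 : 0 < ∏ j ∈ Finset.Iio k, (b k - b j) :=
    Finset.prod_pos fun j hj => sub_pos.2 (hbmono (Finset.mem_Iio.1 hj))
  have h1 : ∏ j ∈ Finset.Iio k, (b k - b j)
      = (-1:ℝ)^(k:ℕ) * ∏ j ∈ Finset.Iio k, (b j - b k) := by
    rw [show (∏ j ∈ Finset.Iio k, (b k - b j)) = ∏ j ∈ Finset.Iio k, (-(b j - b k)) by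
      exact Finset.prod_congr rfl fun j _ => by ring, aux_negprod, Fin.card_Iio]
  have hsq : ((-1:ℝ)^(k:ℕ)) * ((-1:ℝ)^(k:ℕ)) = 1 := by
    rw [← pow_add]
    exact Even.neg_one_pow ⟨(k:ℕ), rfl⟩
  rw [hsplit, Finset.prod_union hdisj]
  have := mul_pos hp1 hp2
  rw [h1] at this
  calc (0:ℝ) < ((-1:ℝ)^(k:ℕ) * ∏ j ∈ Finset.Iio k, (b j - b k)) * ∏ j ∈ Finset.Ioi k, (b j - b k) := this
    _ = (-1:ℝ)^(k:ℕ) * ((∏ j ∈ Finset.Iio k, (b j - b k)) * ∏ j ∈ Finset.Ioi k, (b j - b k)) := by ring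
theorem stmt10 (n : ℕ) (hn : 1 ≤ n) (a b : Fin n → ℝ) (lam : ℝ)
    (ha : ∀ i, 0 < a i) (hb : ∀ i, 0 < b i) (hbmono : StrictMono b) (hlam : 0 < lam)
    (M : Matrix (Fin n) (Fin n) ℝ)
    (hM : ∀ i j, M i j = (if i = j then b i else 0) + 2 * lam * a i * Real.sqrt (b i)) :
    ∃ c : Fin n → ℝ, StrictMono c ∧
      (∀ i, b i < c i) ∧
      (∀ i j : Fin n, (i : ℕ) + 1 = (j : ℕ) → c i < b j) ∧
      (∀ x : ℝ, (M - x • (1 : Matrix (Fin n) (Fin n) ℝ)).det = 0 ↔ ∃ i, x = c i) := by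
  classical
  have hne : (Finset.univ : Finset (Fin n)).Nonempty := ⟨⟨0, hn⟩, Finset.mem_univ _⟩
  set u : Fin n → ℝ := fun i => 2 * lam * a i * Real.sqrt (b i) with hu_def
  have hu : ∀ i, 0 < u i := fun i =>
    mul_pos (mul_pos (mul_pos two_pos hlam) (ha i)) (Real.sqrt_pos.2 (hb i))
  set g : ℝ → ℝ := fun x =>
    (∏ i, (b i - x)) + ∑ i, u i * ∏ j ∈ Finset.univ.erase i, (b j - x) with hg_def
  set hh : ℝ → ℝ := fun x => 1 + ∑ i, u i / (b i - x) with hh_def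
  -- continuity of g
  have gcont : Continuous g := by
    apply Continuous.add
    · exact continuous_finset_prod _ fun i _ => by fun_prop
    · exact continuous_finset_sum _ fun i _ =>
        Continuous.mul continuous_const (continuous_finset_prod _ fun j _ => by fun_prop)
  -- key determinant identity
  have key : ∀ x, (M - x • (1 : Matrix (Fin n) (Fin n) ℝ)).det = g x := by
    have hf : Continuous fun x : ℝ => (M - x • (1 : Matrix (Fin n) (Fin n) ℝ)).det := by
      apply Continuous.matrix_det
      apply continuous_matrix
      intro i j
      simp only [Matrix.sub_apply, Matrix.smul_apply, smul_eq_mul]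
      fun_prop
    have hdense : Dense ((Set.range b)ᶜ : Set ℝ) := by
      rw [Set.compl_eq_univ_diff]
      exact dense_univ.diff_finite (Set.finite_range b)
    have heq : Set.EqOn (fun x : ℝ => (M - x • (1 : Matrix (Fin n) (Fin n) ℝ)).det) g
        ((Set.range b)ᶜ) := by
      intro x hx
      have hbx : ∀ j, b j - x ≠ 0 := fun j => sub_ne_zero.2 fun hj => hx ⟨j, hj⟩
      have hM' : M - x • (1 : Matrix (Fin n) (Fin n) ℝ)
          = Matrix.diagonal (fun i => b i - x) + Matrix.of (fun i _ => u i) := by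
        ext i j
        by_cases hij : i = j <;>
          simp [hM, Matrix.sub_apply, Matrix.smul_apply, Matrix.one_apply,
            Matrix.diagonal_apply, hij, hu_def] <;> ring
      show (M - x • (1 : Matrix (Fin n) (Fin n) ℝ)).det = g x
      rw [hM', aux_det n _ u hbx]
    exact fun x => congrFun (Continuous.ext_on hdense hf gcont heq) x
  -- factorization through hh
  have hfact : ∀ x : ℝ, (∀ j, b j ≠ x) → g x = (∏ i, (b i - x)) * hh x := by
    intro x hx
    exact aux_factor n _ u fun i => sub_ne_zero.2 (hx i)
  have hprodne : ∀ x : ℝ, (∀ j, b j ≠ x) → (∏ i, (b i - x)) ≠ 0 := fun x hx =>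
    Finset.prod_ne_zero_iff.2 fun i _ => sub_ne_zero.2 (hx i)
  have hzero : ∀ x : ℝ, (∀ j, b j ≠ x) → g x = 0 → hh x = 0 := by
    intro x hx hgx
    rcases mul_eq_zero.1 ((hfact x hx) ▸ hgx) with h | h
    · exact absurd h (hprodne x hx)
    · exact h
  -- value at b k and its sign
  have hgb : ∀ k, g (b k) = u k * ∏ j ∈ Finset.univ.erase k, (b j - b k) := by
    intro k
    have h1 : (∏ i, (b i - b k)) = 0 :=
      Finset.prod_eq_zero (Finset.mem_univ k) (sub_self _)
    rw [hg_def]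
    simp only [h1, zero_add]
    rw [Finset.sum_eq_single k]
    · intro i _ hik
      have : ∏ j ∈ Finset.univ.erase i, (b j - b k) = 0 :=
        Finset.prod_eq_zero (Finset.mem_erase.2 ⟨Ne.symm hik, Finset.mem_univ _⟩) (sub_self _)
      rw [this, mul_zero]
    · intro h
      exact absurd (Finset.mem_univ k) h
  have hsign : ∀ k : Fin n, 0 < (-1:ℝ)^(k:ℕ) * g (b k) := by
    intro k
    rw [hgb k]
    have := aux_sign n b hbmono k
    calc (0:ℝ) < u k * ((-1:ℝ)^(k:ℕ) * ∏ j ∈ Finset.univ.erase k, (b j - b k)) :=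
          mul_pos (hu k) this
      _ = (-1:ℝ)^(k:ℕ) * (u k * ∏ j ∈ Finset.univ.erase k, (b j - b k)) := by ring
  have hgbne : ∀ k, g (b k) ≠ 0 := by
    intro k h
    have := hsign k
    rw [h, mul_zero] at this
    exact lt_irrefl _ this
  -- strict monotonicity of hh on gaps
  have hmono : ∀ x1 x2 : ℝ, x1 < x2 → (∀ j, b j < x1 ∨ x2 < b j) → hh x1 < hh x2 := by
    intro x1 x2 h12 hsep
    have hterm : ∀ j : Fin n, u j / (b j - x1) < u j / (b j - x2) := by
      intro j
      have hprod : 0 < (b j - x1) * (b j - x2) := by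
        rcases hsep j with h | h
        · exact mul_pos_of_neg_of_neg (by linarith) (by linarith)
        · exact mul_pos (by linarith) (by linarith)
      have hne1 : b j - x1 ≠ 0 := by
        rcases hsep j with h | h
        · exact ne_of_lt (by linarith)
        · exact ne_of_gt (by linarith)
      have hne2 : b j - x2 ≠ 0 := by
        rcases hsep j with h | h
        · exact ne_of_lt (by linarith)
        · exact ne_of_gt (by linarith)
      have hkey : u j / (b j - x2) - u j / (b j - x1)
          = u j * (x2 - x1) / ((b j - x1) * (b j - x2)) := by
        field_simp
        ring
      have hpos := div_pos (mul_pos (hu j) (sub_pos.2 h12)) hprod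
      rw [← hkey] at hpos
      linarith
    have := Finset.sum_lt_sum_of_nonempty hne fun j _ => hterm j
    simp only [hh_def]
    linarith
  -- the top point X
  set top : Fin n := ⟨n - 1, by omega⟩ with htop_def
  have hbtop : ∀ j : Fin n, b j ≤ b top :=
    fun j => hbmono.monotone (by simp [Fin.le_def, htop_def]; omega)
  set S : ℝ := ∑ i, u i with hS_def
  have hS : 0 < S := Finset.sum_pos (fun i _ => hu i) hne
  set X : ℝ := b top + S + 1 with hX_def
  have hbX : ∀ j, b j < X := fun j => by have := hbtop j; simp only [hX_def]; linarith
  have hXsign : 0 < (-1:ℝ)^n * g X := by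
    have hbneX : ∀ j, b j ≠ X := fun j => ne_of_lt (hbX j)
    rw [hfact X hbneX]
    have hprodeq : (-1:ℝ)^n * ∏ i, (b i - X) = ∏ i, (X - b i) := by
      rw [show (∏ i, (X - b i)) = ∏ i : Fin n, (-(b i - X)) from
        Finset.prod_congr rfl fun i _ => by ring, aux_negprod]
      simp
    have hprodpos : 0 < ∏ i, (X - b i) :=
      Finset.prod_pos fun i _ => sub_pos.2 (hbX i)
    have hhX : 0 < hh X := by
      have hrw : ∀ i : Fin n, u i / (b i - X) = -(u i / (X - b i)) := by
        intro i
        rw [show b i - X = -(X - b i) from by ring, div_neg]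
      have hb1 : ∀ i : Fin n, u i / (X - b i) ≤ u i / (S + 1) := by
        intro i
        apply div_le_div_of_nonneg_left (hu i).le (by linarith)
        have := hbtop i
        simp only [hX_def]
        linarith
      have hle : ∑ i, u i / (X - b i) ≤ S / (S + 1) := by
        rw [hS_def, Finset.sum_div]
        exact Finset.sum_le_sum fun i _ => hb1 i
      have hlt : S / (S + 1) < 1 := (div_lt_one (by linarith)).2 (by linarith)
      have : ∑ i, u i / (b i - X) = -(∑ i, u i / (X - b i)) := by
        rw [← Finset.sum_neg_distrib]
        exact Finset.sum_congr rfl fun i _ => hrw i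
      simp only [hh_def, this]
      linarith
    calc (0:ℝ) < ((-1:ℝ)^n * ∏ i, (b i - X)) * hh X := by rw [hprodeq]; exact mul_pos hprodpos hhX
      _ = (-1:ℝ)^n * ((∏ i, (b i - X)) * hh X) := by ring
  -- existence of roots
  have hex : ∀ k : Fin n, ∃ x : ℝ, (b k < x) ∧ (∀ j : Fin n, (k:ℕ)+1 = (j:ℕ) → x < b j) ∧
      (∀ j : Fin n, b j < x → (j:ℕ) ≤ (k:ℕ)) ∧ g x = 0 := by
    intro k
    by_cases hk : (k:ℕ) + 1 < n
    · set k' : Fin n := ⟨(k:ℕ)+1, hk⟩ with hk'_def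
      have hkk' : k < k' := Fin.lt_def.2 (Nat.lt_succ_self _)
      have h2 : 0 < (-1:ℝ)^((k:ℕ)+1) * g (b k') := hsign k'
      obtain ⟨x, hx, hgx⟩ := aux_ivt gcont (hbmono hkk').le (hsign k) h2
      refine ⟨x, hx.1, ?_, ?_, hgx⟩
      · intro j hj
        have : j = k' := by
          apply Fin.ext
          show (j:ℕ) = (k:ℕ)+1
          omega
        rw [this]
        exact hx.2
      · intro j hbj
        have : b j < b k' := hbj.trans hx.2
        have := hbmono.lt_iff_lt.1 this
        simp [Fin.lt_def, hk'_def] at this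
        omega
    · have hkval : (k:ℕ) = n - 1 := by have := k.isLt; omega
      have hktop : k = top := Fin.ext (by simp [htop_def, hkval])
      have h1 : 0 < (-1:ℝ)^(n-1) * g (b k) := by rw [← hkval]; exact hsign k
      have h2 : 0 < (-1:ℝ)^((n-1)+1) * g X := by
        rw [show (n-1)+1 = n by omega]
        exact hXsign
      obtain ⟨x, hx, hgx⟩ := aux_ivt gcont (hbX k).le h1 h2
      refine ⟨x, hx.1, ?_, ?_, hgx⟩
      · intro j hj
        exact absurd j.isLt (by omega)
      · intro j _
        have := j.isLt
        omega
  choose c hc1 hc2 hc3 hc4 using hex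
  have hbnec : ∀ (k j : Fin n), b j ≠ c k := by
    intro k j h
    exact hgbne j (by rw [h]; exact hc4 k)
  refine ⟨c, ?_, hc1, hc2, ?_⟩
  · -- StrictMono c
    intro i j hij
    have hlt : (i:ℕ) + 1 ≤ (j:ℕ) := hij
    have hjn : (j:ℕ) < n := j.isLt
    set i' : Fin n := ⟨(i:ℕ)+1, by omega⟩ with hi'_def
    calc c i < b i' := hc2 i i' rfl
      _ ≤ b j := hbmono.monotone (by simp [Fin.le_def, hi'_def]; omega)
      _ < c j := hc1 j
  · -- root characterization
    intro x
    rw [key x]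
    constructor
    · intro hgx
      have hbnex : ∀ j, b j ≠ x := by
        intro j h
        exact hgbne j (by rw [h]; exact hgx)
      have hhx : hh x = 0 := hzero x hbnex hgx
      -- there is some j with b j < x
      have hsome : ∃ j, b j < x := by
        by_contra hno
        push_neg at hno
        have hall : ∀ j, x < b j := fun j =>
          lt_of_le_of_ne (hno j) (Ne.symm (hbnex j))
        have : 0 < ∑ i, u i / (b i - x) :=
          Finset.sum_pos (fun i _ => div_pos (hu i) (sub_pos.2 (hall i))) hne
        simp only [hh_def] at hhx
        linarith
      set T : Finset (Fin n) := Finset.univ.filter (fun j => b j < x) with hT_def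
      have hTne : T.Nonempty := by
        obtain ⟨j, hj⟩ := hsome
        exact ⟨j, Finset.mem_filter.2 ⟨Finset.mem_univ _, hj⟩⟩
      set k : Fin n := T.max' hTne with hk_def
      have hbkx : b k < x := (Finset.mem_filter.1 (T.max'_mem hTne)).2
      have hup : ∀ j : Fin n, ¬ (j ≤ k) → x < b j := by
        intro j hj
        by_contra hcon
        push_neg at hcon
        have : b j < x := lt_of_le_of_ne hcon (hbnex j)
        exact hj (T.le_max' j (Finset.mem_filter.2 ⟨Finset.mem_univ _, this⟩))
      have hdown : ∀ j : Fin n, j ≤ k → b j < x :=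
        fun j hj => lt_of_le_of_lt (hbmono.monotone hj) hbkx
      -- same for c k
      have hdownc : ∀ j : Fin n, j ≤ k → b j < c k :=
        fun j hj => lt_of_le_of_lt (hbmono.monotone hj) (hc1 k)
      have hupc : ∀ j : Fin n, ¬ (j ≤ k) → c k < b j := by
        intro j hj
        rcases lt_trichotomy (b j) (c k) with h | h | h
        · exact absurd (Fin.le_def.2 (hc3 k j h)) hj
        · exact absurd h (hbnec k j)
        · exact h
      have hhck : hh (c k) = 0 := hzero (c k) (fun j => hbnec k j) (hc4 k)
      refine ⟨k, ?_⟩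
      by_contra hnex
      rcases lt_or_gt_of_ne hnex with hlt | hgt
      · have := hmono x (c k) hlt (by
          intro j
          by_cases hj : j ≤ k
          · exact Or.inl (hdown j hj)
          · exact Or.inr (hupc j hj))
        rw [hhx, hhck] at this
        exact lt_irrefl _ this
      · have := hmono (c k) x hgt (by
          intro j
          by_cases hj : j ≤ k
          · exact Or.inl (hdownc j hj)
          · exact Or.inr (hup j hj))
        rw [hhx, hhck] at this
        exact lt_irrefl _ this
    · rintro ⟨i, rfl⟩
      exact hc4 i
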